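/- Let F be a field, let A be a finite-dimensional unital associative F-algebra of dimension n, let a ∈ A, and let u be a unit of A. Then the set of scalars λ ∈ F for which a + λ·u is not a unit of A is finite of cardinality at most n. -/

import Mathlib

open Polynomial

lemma spec_isRoot_minpoly {F A : Type*} [Field F] [Ring A] [Algebra F A]
    [FiniteDimensional F A] [Nontrivial A] (b : A) {μ : F} (h : μ ∈ spectrum F b) :
    (minpoly F b).IsRoot μ := by
  by_contra hroot
  set p := minpoly F b with hp
  have hc : p.eval μ ≠ 0 := hroot
  have hdiv : p %ₘ (X - C μ) + (X - C μ) * (p /ₘ (X - C μ)) = p :=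
    p.modByMonic_add_div (X - C μ)
  rw [modByMonic_X_sub_C_eq_C_eval] at hdiv
  have h0 : (aeval b) p = 0 := minpoly.aeval F b
  set q : A := aeval b (p /ₘ (X - C μ)) with hq
  have key : algebraMap F A (p.eval μ) + (b - algebraMap F A μ) * q = 0 := by
    have := congrArg (aeval b) hdiv
    simpa [h0, hq] using this
  -- so (b - algebraMap μ) * q = - algebraMap (eval μ p)
  have hcomm : Commute (b - algebraMap F A μ) q := by
    have : Commute (aeval b (X - C μ)) (aeval b (p /ₘ (X - C μ))) := by
      unfold Commute SemiconjBy
      rw [← map_mul, ← map_mul, mul_comm]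
    simpa [hq] using this
  have hunit : IsUnit (b - algebraMap F A μ) := by
    refine isUnit_iff_exists.mpr ⟨q * algebraMap F A (-(p.eval μ)⁻¹), ?_, ?_⟩
    · have h1 : (b - algebraMap F A μ) * q = algebraMap F A (-(p.eval μ)) := by
        rw [map_neg]
        exact eq_neg_of_add_eq_zero_right key
      rw [← mul_assoc, h1, ← map_mul]
      simp [hc]
    · have h1 : (b - algebraMap F A μ) * q = algebraMap F A (-(p.eval μ)) := by
        rw [map_neg]
        exact eq_neg_of_add_eq_zero_right key
      rw [mul_assoc, Algebra.commutes, ← mul_assoc, ← hcomm.eq, h1, ← map_mul]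
      simp [hc]
  have : IsUnit (algebraMap F A μ - b) := by
    have := hunit.neg
    simpa [neg_sub] using this
  exact (spectrum.mem_iff.mp h) this

theorem stmt2 (F : Type*) [Field F] (A : Type*) [Ring A] [Algebra F A]
    [FiniteDimensional F A] (n : ℕ) (hn : Module.finrank F A = n) (a : A) (u : Aˣ) :
    {lam : F | ¬ IsUnit (a + lam • (u : A))}.Finite ∧
      {lam : F | ¬ IsUnit (a + lam • (u : A))}.ncard ≤ n := by
  classical
  set S := {lam : F | ¬ IsUnit (a + lam • (u : A))} with hS
  rcases subsingleton_or_nontrivial A with h | h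
  · have hempty : S = ∅ :=
      Set.eq_empty_of_forall_notMem fun x hx => hx (isUnit_of_subsingleton _)
    simp [hempty]
  · set b : A := a * ↑u⁻¹ with hb
    have key : ∀ lam : F, lam ∈ S ↔ (-lam) ∈ spectrum F b := by
      intro lam
      have h1 : algebraMap F A (-lam) - b = -((a + lam • (u : A)) * ↑u⁻¹) := by
        rw [add_mul, smul_mul_assoc]
        simp [Algebra.algebraMap_eq_smul_one, hb, sub_eq_add_neg]
      have h2 : IsUnit ((a + lam • (u : A)) * ↑u⁻¹) ↔ IsUnit (a + lam • (u : A)) :=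
        Units.isUnit_mul_units _ u⁻¹
      rw [hS, Set.mem_setOf_eq, spectrum.mem_iff, h1, IsUnit.neg_iff, h2]
    -- the spectrum is contained in the roots of the minimal polynomial
    have hint : IsIntegral F b := Algebra.IsIntegral.isIntegral b
    have hpne : minpoly F b ≠ 0 := minpoly.ne_zero hint
    have hsub : spectrum F b ⊆ ((minpoly F b).roots.toFinset : Set F) := by
      intro μ hμ
      simp only [Finset.coe_sort_coe, Multiset.mem_toFinset, Finset.mem_coe]
      rw [mem_roots hpne]
      exact spec_isRoot_minpoly b hμ
    have hdeg : (minpoly F b).natDegree ≤ n := by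
      have e1 : minpoly F b = minpoly F (Algebra.lmul F A b) :=
        (minpoly.algHom_eq (Algebra.lmul F A) Algebra.lmul_injective b).symm
      rw [e1]
      have hdvd := LinearMap.minpoly_dvd_charpoly (K := F) (Algebra.lmul F A b)
      have hch : (LinearMap.charpoly (Algebra.lmul F A b)).natDegree = n := by
        rw [LinearMap.charpoly_natDegree, hn]
      calc (minpoly F (Algebra.lmul F A b)).natDegree
          ≤ (LinearMap.charpoly (Algebra.lmul F A b)).natDegree :=
            natDegree_le_of_dvd hdvd (LinearMap.charpoly_monic _).ne_zero
        _ = n := hch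
    have hspecfin : (spectrum F b).Finite :=
      Set.Finite.subset (Set.finite_coe_iff.mp inferInstance) hsub
    have hScard : S = Neg.neg ⁻¹' (spectrum F b) := by
      ext lam; simpa using key lam
    have hSfin : S.Finite := by
      rw [hScard]
      exact Set.Finite.preimage (neg_injective.injOn) hspecfin
    refine ⟨hSfin, ?_⟩
    have himg : Neg.neg '' S ⊆ spectrum F b := by
      rintro x ⟨lam, hlam, rfl⟩
      exact (key lam).mp hlam
    calc S.ncard = (Neg.neg '' S).ncard := (Set.ncard_image_of_injective S neg_injective).symm
      _ ≤ (spectrum F b).ncard := Set.ncard_le_ncard himg hspecfin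
      _ ≤ ((minpoly F b).roots.toFinset : Set F).ncard := by
          exact Set.ncard_le_ncard hsub (Set.finite_coe_iff.mp inferInstance)
      _ = (minpoly F b).roots.toFinset.card := by simp [Set.ncard_coe_finset]
      _ ≤ Multiset.card (minpoly F b).roots := Multiset.toFinset_card_le _
      _ ≤ (minpoly F b).natDegree := card_roots' _
      _ ≤ n := hdeg
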